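/- arXiv:1208.5822 — 4 statements merged into one kernel-verified Lean document; each statement's English description precedes it below -/
import Mathlib

section
/- If ψ ∈ W, then ‖Bψ‖_{B⁰[ε,∞)} ≤ λ·‖ψ‖_{B⁰[ε,∞)}, where ‖·‖_{B⁰[ε,∞)} is the supremum norm on [ε,∞); in particular Bψ is bounded and B maps W into W. -/
open Real Set MeasureTheory Filter Topology

set_option maxHeartbeats 1000000

/-- The nonlinear integral operator `B`. -/
noncomputable def opB (lam ε : ℝ) (ψ : ℝ → ℝ) (x : ℝ) : ℝ :=
  (lam / 2) * Real.sqrt (x + ε) *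
    ∫ y in Set.Ioi ε, (1 / (y + x + |y - x|)) * (y / Real.sqrt (y + ε)) *
      (ψ y / (y + (ψ y) ^ 2 / (y + ε)))

/-- Membership in `W`: bounded, continuous and nonnegative on `[ε,∞)`. -/
def memW (ε : ℝ) (ψ : ℝ → ℝ) : Prop :=
  ContinuousOn ψ (Set.Ici ε) ∧ (∃ M : ℝ, ∀ x ∈ Set.Ici ε, |ψ x| ≤ M) ∧
    ∀ x ∈ Set.Ici ε, 0 ≤ ψ x



lemma twoMax (x y : ℝ) : y + x + |y - x| = 2 * max x y := by
  rcases le_total x y with h | h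
  · rw [abs_of_nonneg (by linarith), max_eq_right h]; ring
  · rw [abs_of_nonpos (by linarith), max_eq_left h]; ring

lemma tail_tendsto (ε : ℝ) (hε : 0 ≤ ε) :
    Tendsto (fun y : ℝ => -(Real.sqrt (y + ε) / y)) atTop (𝓝 0) := by
  have h0 : Tendsto (fun y : ℝ => (y + ε) / y ^ 2) atTop (𝓝 0) := by
    have h1 : Tendsto (fun y : ℝ => y⁻¹ + ε * (y ^ 2)⁻¹) atTop (𝓝 (0 + ε * 0)) :=
      tendsto_inv_atTop_zero.add
        ((tendsto_inv_atTop_zero.comp (tendsto_pow_atTop two_ne_zero)).const_mul ε)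
    rw [show (0:ℝ) + ε * 0 = 0 by ring] at h1
    refine h1.congr' ?_
    filter_upwards [eventually_gt_atTop (0:ℝ)] with y hy
    field_simp
  have h2 : Tendsto (fun y : ℝ => Real.sqrt ((y + ε) / y ^ 2)) atTop (𝓝 0) := by
    have := (Real.continuous_sqrt.tendsto 0).comp h0
    simpa [Function.comp_def] using this
  have h3 : Tendsto (fun y : ℝ => Real.sqrt (y + ε) / y) atTop (𝓝 0) := by
    refine h2.congr' ?_
    filter_upwards [eventually_gt_atTop (0:ℝ)] with y hy
    rw [Real.sqrt_div (by linarith), Real.sqrt_sq hy.le]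
  simpa using h3.neg

lemma tail_deriv (ε : ℝ) (hε : 0 ≤ ε) {y : ℝ} (hy : 0 < y) :
    HasDerivAt (fun y : ℝ => -(Real.sqrt (y + ε) / y))
      ((y + 2 * ε) / (2 * y ^ 2 * Real.sqrt (y + ε))) y := by
  have hyε : 0 < y + ε := by linarith
  have hs : Real.sqrt (y + ε) ≠ 0 := (Real.sqrt_pos.2 hyε).ne'
  have h1 : HasDerivAt (fun y : ℝ => Real.sqrt (y + ε)) (1 / (2 * Real.sqrt (y + ε))) y := by
    have := (Real.hasDerivAt_sqrt hyε.ne').comp y ((hasDerivAt_id y).add_const ε)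
    simpa [Function.comp_def] using this
  have h2 : HasDerivAt (fun y : ℝ => -(Real.sqrt (y + ε) / y)) _ y :=
    (h1.div (hasDerivAt_id y) hy.ne').neg
  convert h2 using 1
  have hsq : Real.sqrt (y + ε) * Real.sqrt (y + ε) = y + ε := Real.mul_self_sqrt hyε.le
  simp only [id]
  field_simp
  linear_combination (-2) * hsq

lemma tail_nonneg (ε : ℝ) (hε : 0 ≤ ε) {a : ℝ} (ha : 0 < a) :
    ∀ y ∈ Ioi a, 0 ≤ (y + 2 * ε) / (2 * y ^ 2 * Real.sqrt (y + ε)) := by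
  intro y hy
  have hy0 : 0 < y := lt_trans ha hy
  positivity

lemma tail_integrable (ε : ℝ) (hε : 0 ≤ ε) {a : ℝ} (ha : 0 < a) :
    IntegrableOn (fun y => (y + 2 * ε) / (2 * y ^ 2 * Real.sqrt (y + ε))) (Ioi a) :=
  integrableOn_Ioi_deriv_of_nonneg'
    (fun y hy => tail_deriv ε hε (lt_of_lt_of_le ha hy))
    (tail_nonneg ε hε ha) (tail_tendsto ε hε)

lemma tail_integral (ε : ℝ) (hε : 0 ≤ ε) {a : ℝ} (ha : 0 < a) :
    ∫ y in Ioi a, (y + 2 * ε) / (2 * y ^ 2 * Real.sqrt (y + ε))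
      = Real.sqrt (a + ε) / a := by
  rw [integral_Ioi_of_hasDerivAt_of_nonneg'
    (fun y hy => tail_deriv ε hε (lt_of_lt_of_le ha hy))
    (tail_nonneg ε hε ha) (tail_tendsto ε hε)]
  ring

lemma hcont_den (ε x : ℝ) (hε : 0 < ε) :
    ContinuousOn (fun y => 1 / (2 * max x y * Real.sqrt (y + ε))) (Ici ε) := by
  apply ContinuousOn.div continuousOn_const
  · have : Continuous fun y : ℝ => 2 * max x y * Real.sqrt (y + ε) := by fun_prop
    exact this.continuousOn
  · intro y hy
    have hy0 : 0 < y := lt_of_lt_of_le hε hy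
    have h1 : 0 < max x y := lt_of_lt_of_le hy0 (le_max_right x y)
    have h2 : 0 < Real.sqrt (y + ε) := Real.sqrt_pos.2 (by linarith)
    positivity

lemma h_integrableOn_Ioi_x (ε x : ℝ) (hε : 0 < ε) (hx : ε ≤ x) :
    IntegrableOn (fun y => 1 / (2 * max x y * Real.sqrt (y + ε))) (Ioi x) := by
  have hx0 : 0 < x := lt_of_lt_of_le hε hx
  refine (tail_integrable ε hε.le hx0).mono' ?_ ?_
  · exact ((hcont_den ε x hε).mono (fun y hy => le_trans hx (le_of_lt hy))).aestronglyMeasurable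
      measurableSet_Ioi
  · rw [ae_restrict_iff' measurableSet_Ioi]
    refine ae_of_all _ fun y hy => ?_
    have hy0 : 0 < y := lt_of_lt_of_le hx0 (le_of_lt hy)
    have hyε : 0 < y + ε := by linarith
    have hs : 0 < Real.sqrt (y + ε) := Real.sqrt_pos.2 hyε
    have hmax : 0 < max x y := lt_of_lt_of_le hy0 (le_max_right x y)
    rw [Real.norm_eq_abs, abs_of_nonneg (by positivity)]
    rw [div_le_div_iff₀ (by positivity) (by positivity)]
    have h1 : y * y ≤ (y + 2 * ε) * max x y := by nlinarith [le_max_right x y]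
    nlinarith [mul_le_mul_of_nonneg_right h1 (by positivity : (0:ℝ) ≤ 2 * Real.sqrt (y + ε))]

lemma h_le_tail (ε x y : ℝ) (hε : 0 < ε) (hy : ε < y) :
    1 / (2 * max x y * Real.sqrt (y + ε)) ≤ (y + 2 * ε) / (2 * y ^ 2 * Real.sqrt (y + ε)) := by
  have hy0 : 0 < y := lt_trans hε hy
  have hs : 0 < Real.sqrt (y + ε) := Real.sqrt_pos.2 (by linarith)
  have hmax : 0 < max x y := lt_of_lt_of_le hy0 (le_max_right x y)
  rw [div_le_div_iff₀ (by positivity) (by positivity)]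
  have h1 : y * y ≤ (y + 2 * ε) * max x y := by nlinarith [le_max_right x y]
  nlinarith [mul_le_mul_of_nonneg_right h1 (by positivity : (0:ℝ) ≤ 2 * Real.sqrt (y + ε))]

lemma front_integral (ε x : ℝ) (hε : 0 < ε) (hx : ε ≤ x) :
    ∫ y in Ioc ε x, 1 / (2 * max x y * Real.sqrt (y + ε))
      = (Real.sqrt (x + ε) - Real.sqrt (ε + ε)) / x := by
  have hx0 : 0 < x := lt_of_lt_of_le hε hx
  rw [setIntegral_congr_fun measurableSet_Ioc
    (fun y (hy : y ∈ Ioc ε x) => by simp only []; rw [max_eq_left hy.2] :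
      EqOn (fun y => 1 / (2 * max x y * Real.sqrt (y + ε)))
        (fun y => 1 / (2 * x * Real.sqrt (y + ε))) (Ioc ε x))]
  rw [← intervalIntegral.integral_of_le hx]
  have hderiv : ∀ y ∈ uIcc ε x, HasDerivAt (fun y => Real.sqrt (y + ε) / x)
      (1 / (2 * x * Real.sqrt (y + ε))) y := by
    intro y hy
    rw [uIcc_of_le hx] at hy
    have hyε : 0 < y + ε := by linarith [hy.1]
    have h1 : HasDerivAt (fun y : ℝ => Real.sqrt (y + ε)) (1 / (2 * Real.sqrt (y + ε))) y := by
      have := (Real.hasDerivAt_sqrt hyε.ne').comp y ((hasDerivAt_id y).add_const ε)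
      simpa [Function.comp_def] using this
    have : HasDerivAt (fun y => Real.sqrt (y + ε) / x) _ y := h1.div_const x
    convert this using 1
    have hs : Real.sqrt (y + ε) ≠ 0 := (Real.sqrt_pos.2 hyε).ne'
    field_simp
  have hint : IntervalIntegrable (fun y => 1 / (2 * x * Real.sqrt (y + ε)))
      MeasureTheory.volume ε x := by
    apply ContinuousOn.intervalIntegrable
    apply ContinuousOn.div continuousOn_const
    · have : Continuous fun y : ℝ => 2 * x * Real.sqrt (y + ε) := by fun_prop
      exact this.continuousOn
    · intro y hy
      rw [uIcc_of_le hx] at hy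
      have hyε : 0 < y + ε := by linarith [hy.1]
      have : 0 < Real.sqrt (y + ε) := Real.sqrt_pos.2 hyε
      positivity
  rw [intervalIntegral.integral_eq_sub_of_hasDerivAt hderiv hint]
  ring

lemma h_integrableOn (ε x : ℝ) (hε : 0 < ε) (hx : ε ≤ x) :
    IntegrableOn (fun y => 1 / (2 * max x y * Real.sqrt (y + ε))) (Ioi ε) := by
  rw [← Ioc_union_Ioi_eq_Ioi hx]
  refine IntegrableOn.union ?_ (h_integrableOn_Ioi_x ε x hε hx)
  exact (((hcont_den ε x hε).mono (Icc_subset_Ici_self)).integrableOn_Icc).mono_set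
    Ioc_subset_Icc_self

lemma h_integral_le (ε x : ℝ) (hε : 0 < ε) (hx : ε ≤ x) :
    ∫ y in Ioi ε, 1 / (2 * max x y * Real.sqrt (y + ε)) ≤ 2 / Real.sqrt (x + ε) := by
  have hx0 : 0 < x := lt_of_lt_of_le hε hx
  have int1 : IntegrableOn (fun y => 1 / (2 * max x y * Real.sqrt (y + ε))) (Ioc ε x) :=
    (((hcont_den ε x hε).mono (Icc_subset_Ici_self)).integrableOn_Icc).mono_set
      Ioc_subset_Icc_self
  have int2 := h_integrableOn_Ioi_x ε x hε hx
  rw [← Ioc_union_Ioi_eq_Ioi hx,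
    setIntegral_union (Ioc_disjoint_Ioi le_rfl) measurableSet_Ioi int1 int2]
  have hfront : ∫ y in Ioc ε x, 1 / (2 * max x y * Real.sqrt (y + ε))
      = (Real.sqrt (x + ε) - Real.sqrt (ε + ε)) / x := front_integral ε x hε hx
  have htail : ∫ y in Ioi x, 1 / (2 * max x y * Real.sqrt (y + ε))
      ≤ Real.sqrt (x + ε) / x := by
    rw [← tail_integral ε hε.le hx0]
    refine setIntegral_mono_on int2 (tail_integrable ε hε.le hx0) measurableSet_Ioi ?_
    intro y hy
    exact h_le_tail ε x y hε (lt_of_le_of_lt hx hy)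
  rw [hfront]
  have hs : 0 < Real.sqrt (x + ε) := Real.sqrt_pos.2 (by linarith)
  have hts : Real.sqrt (ε + ε) ≤ Real.sqrt (x + ε) := Real.sqrt_le_sqrt (by linarith)
  have ht0 : 0 ≤ Real.sqrt (ε + ε) := Real.sqrt_nonneg _
  have hss : Real.sqrt (x + ε) * Real.sqrt (x + ε) = x + ε := Real.mul_self_sqrt (by linarith)
  have htt : Real.sqrt (ε + ε) * Real.sqrt (ε + ε) = ε + ε := Real.mul_self_sqrt (by linarith)
  have key : (Real.sqrt (x + ε) - Real.sqrt (ε + ε)) / x + Real.sqrt (x + ε) / x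
      ≤ 2 / Real.sqrt (x + ε) := by
    rw [← add_div, div_le_div_iff₀ hx0 hs]
    nlinarith [mul_le_mul_of_nonneg_left hts ht0]
  linarith [htail, key]

theorem stmt_15 (ε lam : ℝ) (hε : 0 < ε) (hlam0 : 0 < lam) (hlam1 : lam < 1)
    (ψ : ℝ → ℝ) (hψ : memW ε ψ) :
    sSup ((fun x => |opB lam ε ψ x|) '' Set.Ici ε) ≤
        lam * sSup ((fun x => |ψ x|) '' Set.Ici ε) ∧
      memW ε (opB lam ε ψ) := by
  obtain ⟨hψc, ⟨M0, hM0⟩, hψ0⟩ := hψ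
  set M : ℝ := sSup ((fun x => |ψ x|) '' Set.Ici ε) with hM
  have hbdd : BddAbove ((fun x => |ψ x|) '' Set.Ici ε) := by
    refine ⟨M0, ?_⟩
    rintro b ⟨x, hx, rfl⟩
    exact hM0 x hx
  have hMle : ∀ x ∈ Set.Ici ε, |ψ x| ≤ M :=
    fun x hx => le_csSup hbdd (mem_image_of_mem _ hx)
  have hM0' : 0 ≤ M := le_trans (abs_nonneg _) (hMle ε self_mem_Ici)
  set g : ℝ → ℝ → ℝ := fun x y =>
    (1 / (y + x + |y - x|)) * (y / Real.sqrt (y + ε)) *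
      (ψ y / (y + (ψ y) ^ 2 / (y + ε))) with hg
  -- basic facts at points y > ε
  have hyfacts : ∀ y : ℝ, y ∈ Ioi ε → 0 < y ∧ 0 < y + ε ∧ 0 < Real.sqrt (y + ε) ∧
      0 ≤ ψ y ∧ 0 < y + (ψ y) ^ 2 / (y + ε) := by
    intro y hy
    have hy0 : 0 < y := lt_trans hε hy
    have hyε : 0 < y + ε := by linarith
    refine ⟨hy0, hyε, Real.sqrt_pos.2 hyε, hψ0 y (mem_Ici.2 (le_of_lt hy)), ?_⟩
    have : 0 ≤ (ψ y) ^ 2 / (y + ε) := by positivity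
    linarith
  have gpos : ∀ x : ℝ, ∀ y ∈ Ioi ε, 0 ≤ g x y := by
    intro x y hy
    obtain ⟨hy0, hyε, hs, hψy, hd⟩ := hyfacts y hy
    have hden : 0 < y + x + |y - x| := by rw [twoMax]; positivity
    have h1 : 0 ≤ 1 / (y + x + |y - x|) := by positivity
    have h2 : 0 ≤ y / Real.sqrt (y + ε) := by positivity
    have h3 : 0 ≤ ψ y / (y + (ψ y) ^ 2 / (y + ε)) := by positivity
    exact mul_nonneg (mul_nonneg h1 h2) h3
  have gbound : ∀ x : ℝ, ∀ y ∈ Ioi ε,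
      g x y ≤ M * (1 / (2 * max x y * Real.sqrt (y + ε))) := by
    intro x y hy
    obtain ⟨hy0, hyε, hs, hψy, hd⟩ := hyfacts y hy
    have hmax : 0 < max x y := lt_of_lt_of_le hy0 (le_max_right x y)
    have hq : ψ y / (y + (ψ y) ^ 2 / (y + ε)) ≤ M / y := by
      have h1 : ψ y / (y + (ψ y) ^ 2 / (y + ε)) ≤ ψ y / y := by
        apply div_le_div_of_nonneg_left hψy hy0
        have : 0 ≤ (ψ y) ^ 2 / (y + ε) := by positivity
        linarith
      have h2 : ψ y / y ≤ M / y := by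
        apply (div_le_div_iff_of_pos_right hy0).2
        calc ψ y ≤ |ψ y| := le_abs_self _
          _ ≤ M := hMle y (mem_Ici.2 (le_of_lt hy))
      linarith
    have hq0 : 0 ≤ ψ y / (y + (ψ y) ^ 2 / (y + ε)) := by positivity
    have hfac : 0 ≤ (1 / (y + x + |y - x|)) * (y / Real.sqrt (y + ε)) := by
      have hden : 0 < y + x + |y - x| := by rw [twoMax]; positivity
      positivity
    calc g x y ≤ (1 / (y + x + |y - x|)) * (y / Real.sqrt (y + ε)) * (M / y) :=
          mul_le_mul_of_nonneg_left hq hfac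
      _ = M * (1 / (2 * max x y * Real.sqrt (y + ε))) := by
          rw [twoMax]
          field_simp
  -- measurability of g x on Ioi ε
  have gmeas : ∀ x : ℝ, AEStronglyMeasurable (g x) (volume.restrict (Ioi ε)) := by
    intro x
    have hc : ContinuousOn (g x) (Ioi ε) := by
      apply ContinuousOn.mul
      apply ContinuousOn.mul
      · apply ContinuousOn.div continuousOn_const
        · have : Continuous fun y : ℝ => y + x + |y - x| := by fun_prop
          exact this.continuousOn
        · intro y hy
          have hy0 : 0 < y := lt_trans hε hy
          rw [twoMax]
          have : 0 < max x y := lt_of_lt_of_le hy0 (le_max_right x y)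
          positivity
      · apply ContinuousOn.div continuousOn_id
        · have : Continuous fun y : ℝ => Real.sqrt (y + ε) := by fun_prop
          exact this.continuousOn
        · intro y hy
          have hy0 : 0 < y := lt_trans hε hy
          exact (Real.sqrt_pos.2 (by linarith)).ne'
      · apply ContinuousOn.div (hψc.mono Ioi_subset_Ici_self)
        · apply ContinuousOn.add continuousOn_id
          apply ContinuousOn.div
          · exact ((hψc.mono Ioi_subset_Ici_self).pow 2)
          · exact (continuous_id.add continuous_const).continuousOn
          · intro y hy
            have hy0 : 0 < y := lt_trans hε hy
            exact (by linarith : (0:ℝ) < y + ε).ne'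
        · intro y hy
          exact (hyfacts y hy).2.2.2.2.ne'
    exact hc.aestronglyMeasurable measurableSet_Ioi
  -- integrability of g x for x ≥ ε
  have gint : ∀ x ∈ Set.Ici ε, IntegrableOn (g x) (Ioi ε) := by
    intro x hx
    refine ((h_integrableOn ε x hε hx).const_mul M).mono' (gmeas x) ?_
    rw [ae_restrict_iff' measurableSet_Ioi]
    refine ae_of_all _ fun y hy => ?_
    rw [Real.norm_eq_abs, abs_of_nonneg (gpos x y hy)]
    exact gbound x y hy
  -- bound on the integral
  have hFle : ∀ x ∈ Set.Ici ε, ∫ y in Ioi ε, g x y ≤ M * (2 / Real.sqrt (x + ε)) := by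
    intro x hx
    have step1 : ∫ y in Ioi ε, g x y
        ≤ ∫ y in Ioi ε, M * (1 / (2 * max x y * Real.sqrt (y + ε))) := by
      refine setIntegral_mono_on (gint x hx) ((h_integrableOn ε x hε hx).const_mul M)
        measurableSet_Ioi ?_
      intro y hy
      exact gbound x y hy
    have step2 : ∫ y in Ioi ε, M * (1 / (2 * max x y * Real.sqrt (y + ε)))
        = M * ∫ y in Ioi ε, 1 / (2 * max x y * Real.sqrt (y + ε)) :=
      integral_const_mul M _
    calc ∫ y in Ioi ε, g x y ≤ _ := step1
      _ = _ := step2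
      _ ≤ M * (2 / Real.sqrt (x + ε)) :=
          mul_le_mul_of_nonneg_left (h_integral_le ε x hε hx) hM0'
  have hF0 : ∀ x : ℝ, 0 ≤ ∫ y in Ioi ε, g x y := by
    intro x
    exact setIntegral_nonneg measurableSet_Ioi (gpos x)
  -- pointwise bound on opB
  have hopB : ∀ x ∈ Set.Ici ε, |opB lam ε ψ x| ≤ lam * M := by
    intro x hx
    have hsx : 0 < Real.sqrt (x + ε) := Real.sqrt_pos.2 (by have := hx.out; linarith)
    have heq : opB lam ε ψ x = (lam / 2) * Real.sqrt (x + ε) * ∫ y in Ioi ε, g x y := rfl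
    have hnn : 0 ≤ (lam / 2) * Real.sqrt (x + ε) * ∫ y in Ioi ε, g x y :=
      mul_nonneg (mul_nonneg (by positivity) (Real.sqrt_nonneg _)) (hF0 x)
    rw [heq, abs_of_nonneg hnn]
    calc (lam / 2) * Real.sqrt (x + ε) * ∫ y in Ioi ε, g x y
        ≤ (lam / 2) * Real.sqrt (x + ε) * (M * (2 / Real.sqrt (x + ε))) := by
          apply mul_le_mul_of_nonneg_left (hFle x hx) (by positivity)
      _ = lam * M := by
          field_simp
  -- continuity of the integral
  have hFcont : Continuous fun x => ∫ y in Ioi ε, g x y := by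
    refine continuous_of_dominated gmeas
      (bound := fun y => M * ((y + 2 * ε) / (2 * y ^ 2 * Real.sqrt (y + ε)))) ?_ ?_ ?_
    · intro x
      rw [ae_restrict_iff' measurableSet_Ioi]
      refine ae_of_all _ fun y hy => ?_
      rw [Real.norm_eq_abs, abs_of_nonneg (gpos x y hy)]
      calc g x y ≤ M * (1 / (2 * max x y * Real.sqrt (y + ε))) := gbound x y hy
        _ ≤ M * ((y + 2 * ε) / (2 * y ^ 2 * Real.sqrt (y + ε))) :=
            mul_le_mul_of_nonneg_left (h_le_tail ε x y hε hy) hM0'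
    · exact (tail_integrable ε hε.le hε).const_mul M
    · rw [ae_restrict_iff' measurableSet_Ioi]
      refine ae_of_all _ fun y hy => ?_
      have hy0 : 0 < y := lt_trans hε hy
      have hA : Continuous fun x : ℝ => 1 / (y + x + |y - x|) := by
        apply Continuous.div continuous_const (by fun_prop)
        intro x
        rw [twoMax]
        have : 0 < max x y := lt_of_lt_of_le hy0 (le_max_right x y)
        positivity
      exact (hA.mul continuous_const).mul continuous_const
  have hopBc : Continuous (opB lam ε ψ) := by
    have : opB lam ε ψ = fun x => (lam / 2) * Real.sqrt (x + ε) * ∫ y in Ioi ε, g x y := rfl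
    rw [this]
    exact (continuous_const.mul
      (Real.continuous_sqrt.comp (continuous_id.add continuous_const))).mul hFcont
  have hopB0 : ∀ x ∈ Set.Ici ε, 0 ≤ opB lam ε ψ x := by
    intro x _
    exact mul_nonneg (mul_nonneg (by positivity) (Real.sqrt_nonneg _)) (hF0 x)
  constructor
  · refine csSup_le ⟨_, mem_image_of_mem _ (self_mem_Ici (a := ε))⟩ ?_
    rintro b ⟨x, hx, rfl⟩
    exact hopB x hx
  · exact ⟨hopBc.continuousOn, ⟨lam * M, hopB⟩, hopB0⟩
end

section
/- For every real ε > 0 and every x ≥ ε, one has √(x+ε)·{ 1/(√(x+ε) + √ε) + (1/√ε)·ln(√(1 + ε/x) + √(ε/x)) } < 2. -/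
open Real

lemma log_aux_16 {u : ℝ} (hu : 0 ≤ u) :
    Real.log (Real.sqrt (1 + u ^ 2) + u) ≤ u := by
  have h1 : Real.sqrt (1 + u ^ 2) ≤ 1 + u ^ 2 / 2 := by
    rw [show (1 : ℝ) + u ^ 2 / 2 = Real.sqrt ((1 + u ^ 2 / 2) ^ 2) from
      (Real.sqrt_sq (by positivity)).symm]
    exact Real.sqrt_le_sqrt (by nlinarith)
  have h2 : 1 + u + u ^ 2 / 2 ≤ Real.exp u := Real.quadratic_le_exp_of_nonneg hu
  have hpos : 0 < Real.sqrt (1 + u ^ 2) + u := by positivity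
  calc Real.log (Real.sqrt (1 + u ^ 2) + u)
      ≤ Real.log (Real.exp u) := Real.log_le_log hpos (by linarith)
    _ = u := Real.log_exp u

set_option maxHeartbeats 1000000 in
theorem stmt_16 (ε x : ℝ) (hε : 0 < ε) (hx : ε ≤ x) :
    Real.sqrt (x + ε) *
        (1 / (Real.sqrt (x + ε) + Real.sqrt ε) +
          (1 / Real.sqrt ε) *
            Real.log (Real.sqrt (1 + ε / x) + Real.sqrt (ε / x))) < 2 := by
  have hxpos : 0 < x := lt_of_lt_of_le hε hx
  set B := Real.sqrt ε with hBdef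
  set X := Real.sqrt x with hXdef
  set A := Real.sqrt (x + ε) with hAdef
  clear_value B X A
  have hB : 0 < B := hBdef ▸ Real.sqrt_pos.2 hε
  have hX : 0 < X := hXdef ▸ Real.sqrt_pos.2 hxpos
  have hA : 0 < A := hAdef ▸ Real.sqrt_pos.2 (by linarith : (0:ℝ) < x + ε)
  have hB2 : B ^ 2 = ε := hBdef ▸ Real.sq_sqrt hε.le
  have hX2 : X ^ 2 = x := hXdef ▸ Real.sq_sqrt hxpos.le
  have hA2 : A ^ 2 = x + ε := hAdef ▸ Real.sq_sqrt (by linarith : (0:ℝ) ≤ x + ε)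
  have hBX : B ≤ X := hBdef ▸ hXdef ▸ Real.sqrt_le_sqrt hx
  have hu : Real.sqrt (ε / x) = B / X := by rw [hBdef, hXdef]; exact Real.sqrt_div hε.le x
  have hε_eq : ε / x = (B / X) ^ 2 := by
    rw [div_pow, hB2, hX2]
  have hL : Real.log (Real.sqrt (1 + ε / x) + Real.sqrt (ε / x)) ≤ B / X := by
    rw [hu, hε_eq]
    exact log_aux_16 (by positivity)
  rcases eq_or_lt_of_le hx with rfl | hlt
  · -- case x = ε : need strict bound on log
    have h12 : ε / ε = 1 := div_self hε.ne'
    have h11 : (1 : ℝ) + ε / ε = 2 := by rw [h12]; norm_num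
    have hs2 : A = Real.sqrt 2 * B := by
      rw [hAdef, hBdef, show ε + ε = 2 * ε by ring, Real.sqrt_mul (by norm_num)]
    rw [h11, h12, hs2, Real.sqrt_one]
    set s := Real.sqrt 2 with hsdef
    have hs : 0 < s := Real.sqrt_pos.2 (by norm_num)
    have hs2' : s ^ 2 = 2 := Real.sq_sqrt (by norm_num)
    have hslb : 1.414 < s := by nlinarith
    have hsub : s < 1.415 := by nlinarith
    have he : (2.7182818283 : ℝ) < Real.exp 1 := Real.exp_one_gt_d9
    have hlog : Real.log (s + 1) ≤ (s + 1) / Real.exp 1 := by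
      have h := Real.log_le_sub_one_of_pos (show 0 < (s + 1) / Real.exp 1 by positivity)
      rw [Real.log_div (by positivity) (Real.exp_pos 1).ne', Real.log_exp] at h
      linarith
    have hepos : 0 < Real.exp 1 := Real.exp_pos 1
    have hexpand : Real.sqrt 2 * B * (1 / (Real.sqrt 2 * B + B) + 1 / B * Real.log (s + 1))
        = s / (s + 1) + s * Real.log (s + 1) := by
      rw [← hsdef]
      field_simp
    rw [hexpand]
    have hfrac : s / (s + 1) < 0.5859 := by
      rw [div_lt_iff₀ (by linarith)]
      nlinarith
    have hterm : s * Real.log (s + 1) ≤ s * ((s + 1) / Real.exp 1) := by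
      exact mul_le_mul_of_nonneg_left hlog hs.le
    have : s * ((s + 1) / Real.exp 1) < 1.26 := by
      rw [mul_div_assoc', div_lt_iff₀ hepos]
      nlinarith
    linarith
  · -- case ε < x : strict arithmetic inequality
    have hBXlt : B < X := by
      rw [hBdef, hXdef]; exact Real.sqrt_lt_sqrt hε.le hlt
    have hXA : X ≤ A := by rw [hXdef, hAdef]; exact Real.sqrt_le_sqrt (by linarith)
    have step1 : A * (1 / (A + B) + 1 / B *
        Real.log (Real.sqrt (1 + ε / x) + Real.sqrt (ε / x)))
        ≤ A / (A + B) + A / X := by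
      have h3 : 1 / B * Real.log (Real.sqrt (1 + ε / x) + Real.sqrt (ε / x)) ≤ 1 / X := by
        rw [div_mul_eq_mul_div, one_mul, div_le_div_iff₀ hB hX]
        have := mul_le_mul_of_nonneg_right hL hX.le
        rw [div_mul_cancel₀ _ hX.ne'] at this
        linarith
      have := mul_le_mul_of_nonneg_left h3 hA.le
      calc A * (1 / (A + B) + 1 / B *
          Real.log (Real.sqrt (1 + ε / x) + Real.sqrt (ε / x)))
          = A / (A + B) + A * (1 / B *
            Real.log (Real.sqrt (1 + ε / x) + Real.sqrt (ε / x))) := by ring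
        _ ≤ A / (A + B) + A * (1 / X) := by linarith
        _ = A / (A + B) + A / X := by ring
    have step2 : A / (A + B) + A / X < 2 := by
      rw [div_add_div _ _ (by positivity) hX.ne', div_lt_iff₀ (by positivity)]
      have h := mul_pos (sub_pos.2 hBXlt) (show 0 < A - X + B by linarith)
      have h' : 0 < X * A + 2 * (B * X) - X ^ 2 - B ^ 2 - A * B := by nlinarith [h]
      nlinarith [h', hA2, hX2, hB2]
    linarith
end

section
/- For all ψ, φ ∈ W one has ‖Bψ − Bφ‖_{B⁰[ε,∞)} ≤ λ·‖ψ − φ‖_{B⁰[ε,∞)}; since 0 < λ < 1, the operator B : W → W is a contraction. -/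
open Real Set MeasureTheory

section Aux
open Filter


lemma lip (y s u v : ℝ) (hy : 0 < y) (hs : 0 < s) (hu : 0 ≤ u) (hv : 0 ≤ v) :
    |u / (y + u ^ 2 / s) - v / (y + v ^ 2 / s)| ≤ |u - v| / y := by
  have hDu : 0 < y + u ^ 2 / s := by positivity
  have hDv : 0 < y + v ^ 2 / s := by positivity
  have hEq : u / (y + u ^ 2 / s) - v / (y + v ^ 2 / s)
      = ((u - v) * (y - u * v / s)) / ((y + u ^ 2 / s) * (y + v ^ 2 / s)) := by
    field_simp
    ring
  have e3 : (y + u ^ 2 / s) * (y + v ^ 2 / s) = (y * s + u ^ 2) * (y * s + v ^ 2) / s ^ 2 := by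
    field_simp
  have key : |y - u * v / s| * y ≤ (y + u ^ 2 / s) * (y + v ^ 2 / s) := by
    rcases abs_cases (y - u * v / s) with ⟨h1, _⟩ | ⟨h1, _⟩ <;> rw [h1, e3]
    · have e1 : (y * s - u * v) * (y * s) ≤ (y * s + u ^ 2) * (y * s + v ^ 2) := by
        nlinarith [sq_nonneg (u + v), mul_pos hy hs,
          mul_nonneg (mul_nonneg hu hv) (mul_pos hy hs).le]
      have e2 : (y - u * v / s) * y = (y * s - u * v) * (y * s) / s ^ 2 := by field_simp
      rw [e2]
      exact div_le_div_of_nonneg_right e1 (by positivity)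
    · have e1 : (u * v - y * s) * (y * s) ≤ (y * s + u ^ 2) * (y * s + v ^ 2) := by
        nlinarith [sq_nonneg (u - v), mul_pos hy hs,
          mul_nonneg (mul_nonneg hu hv) (mul_pos hy hs).le]
      have e2 : -(y - u * v / s) * y = (u * v - y * s) * (y * s) / s ^ 2 := by field_simp; ring
      rw [e2]
      exact div_le_div_of_nonneg_right e1 (by positivity)
  rw [hEq, abs_div, abs_mul, abs_of_pos (mul_pos hDu hDv),
    div_le_div_iff₀ (mul_pos hDu hDv) hy]
  calc |u - v| * |y - u * v / s| * y = |u - v| * (|y - u * v / s| * y) := by ring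
    _ ≤ |u - v| * ((y + u ^ 2 / s) * (y + v ^ 2 / s)) :=
        mul_le_mul_of_nonneg_left key (abs_nonneg _)


lemma sqrt_tendsto_atTop : Filter.Tendsto Real.sqrt Filter.atTop Filter.atTop := by
  apply Filter.tendsto_atTop_atTop.2
  intro b
  refine ⟨(max b 0) ^ 2, fun a ha => ?_⟩
  have h1 : max b 0 = Real.sqrt ((max b 0) ^ 2) := (Real.sqrt_sq (le_max_right _ _)).symm
  have h2 : Real.sqrt ((max b 0) ^ 2) ≤ Real.sqrt a := Real.sqrt_le_sqrt ha
  exact le_trans (le_max_left b 0) (h1 ▸ h2)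

lemma kernel_cont (ε x : ℝ) (hε : 0 < ε) (hx : ε ≤ x) {s : Set ℝ} (hs : s ⊆ Ici ε) :
    ContinuousOn (fun y => 1 / ((y + x + |y - x|) * Real.sqrt (y + ε))) s := by
  intro y hy
  have hy' : ε ≤ y := hs hy
  have h1 : (0:ℝ) < y + x + |y - x| := by
    have := abs_nonneg (y - x); linarith
  have h2 : 0 < Real.sqrt (y + ε) := Real.sqrt_pos.2 (by linarith)
  have hc : ContinuousAt (fun y => 1 / ((y + x + |y - x|) * Real.sqrt (y + ε))) y := by
    apply ContinuousAt.div continuousAt_const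
    · exact (((continuous_id.add continuous_const).add
        ((continuous_id.sub continuous_const).abs)).mul
        (Real.continuous_sqrt.comp (continuous_id.add continuous_const))).continuousAt
    · exact ne_of_gt (mul_pos h1 h2)
  exact hc.continuousWithinAt

lemma kernel_intgr (ε x : ℝ) (hε : 0 < ε) (hx : ε ≤ x) :
    IntegrableOn (fun y => 1 / ((y + x + |y - x|) * Real.sqrt (y + ε))) (Ioi ε) volume ∧
    (∫ y in Ioi ε, 1 / ((y + x + |y - x|) * Real.sqrt (y + ε)))
      ≤ 2 / Real.sqrt (x + ε) := by
  have hx0 : (0:ℝ) < x := lt_of_lt_of_le hε hx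
  set h : ℝ → ℝ := fun y => 1 / ((y + x + |y - x|) * Real.sqrt (y + ε)) with hh
  -- Part 1 : on Ioc ε x
  set h1 : ℝ → ℝ := fun y => 1 / (2 * x * Real.sqrt (y + ε)) with hh1
  have heqon1 : EqOn h h1 (Ioc ε x) := by
    intro y hy
    have : |y - x| = -(y - x) := abs_of_nonpos (by linarith [hy.2])
    simp only [hh, hh1, this]
    rw [show y + x + -(y - x) = 2 * x by ring]
  have hc1 : ContinuousOn h1 (Icc ε x) := by
    intro y hy
    have h2 : 0 < Real.sqrt (y + ε) := Real.sqrt_pos.2 (by nlinarith [hy.1])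
    exact (ContinuousAt.div continuousAt_const
      ((continuous_const.mul (Real.continuous_sqrt.comp
        (continuous_id.add continuous_const))).continuousAt)
      (ne_of_gt (mul_pos (mul_pos two_pos hx0) h2))).continuousWithinAt
  have hii : IntervalIntegrable h1 volume ε x :=
    (hc1.mono (by rw [uIcc_of_le hx])).intervalIntegrable
  have hint1 : IntegrableOn h1 (Ioc ε x) volume :=
    (intervalIntegrable_iff_integrableOn_Ioc_of_le hx).1 hii
  have hval1 : ∫ y in Ioc ε x, h1 y = (Real.sqrt (x + ε) - Real.sqrt (2 * ε)) / x := by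
    rw [← intervalIntegral.integral_of_le hx]
    have : ∫ y in ε..x, h1 y
        = (fun y => Real.sqrt (y + ε) / x) x - (fun y => Real.sqrt (y + ε) / x) ε := by
      apply intervalIntegral.integral_eq_sub_of_hasDerivAt
        (f := fun y => Real.sqrt (y + ε) / x) (f' := h1) _ hii
      intro y hy
      rw [uIcc_of_le hx] at hy
      have hy0 : (0:ℝ) < y + ε := by nlinarith [hy.1]
      have hd : HasDerivAt (fun y => Real.sqrt (y + ε)) (1 / (2 * Real.sqrt (y + ε))) y := by
        have := (Real.hasDerivAt_sqrt (ne_of_gt hy0)).comp y ((hasDerivAt_id y).add_const ε)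
        simpa [Function.comp_def] using this
      have := hd.div_const x
      convert this using 1
      have hs : Real.sqrt (y + ε) ≠ 0 := ne_of_gt (Real.sqrt_pos.2 hy0)
      show 1 / (2 * x * Real.sqrt (y + ε)) = 1 / (2 * Real.sqrt (y + ε)) / x
      rw [div_div]
      ring_nf
      rfl
    rw [this]
    show Real.sqrt (x + ε) / x - Real.sqrt (ε + ε) / x = _
    rw [show ε + ε = 2 * ε by ring]
    ring
  -- Part 2 : on Ioi x
  set g : ℝ → ℝ := fun y => -(Real.sqrt (y + ε) / y) with hg
  set g' : ℝ → ℝ := fun y => (y + 2 * ε) / (2 * y ^ 2 * Real.sqrt (y + ε)) with hg'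
  have hgc : ContinuousWithinAt g (Ici x) x := by
    have : 0 < Real.sqrt (x + ε) := Real.sqrt_pos.2 (by linarith)
    exact (ContinuousAt.neg (ContinuousAt.div
      ((Real.continuous_sqrt.comp (continuous_id.add continuous_const)).continuousAt)
      continuousAt_id (ne_of_gt hx0))).continuousWithinAt
  have hgd : ∀ y ∈ Ioi x, HasDerivAt g (g' y) y := by
    intro y hy
    have hyx : x < y := hy
    have hy0 : (0:ℝ) < y := lt_trans hx0 hyx
    have hye : (0:ℝ) < y + ε := by linarith
    have hs : Real.sqrt (y + ε) ≠ 0 := ne_of_gt (Real.sqrt_pos.2 hye)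
    have hd : HasDerivAt (fun y => Real.sqrt (y + ε)) (1 / (2 * Real.sqrt (y + ε))) y := by
      have := (Real.hasDerivAt_sqrt (ne_of_gt hye)).comp y ((hasDerivAt_id y).add_const ε)
      simpa [Function.comp_def] using this
    have hd2 := (hd.div (hasDerivAt_id y) (ne_of_gt hy0)).neg
    convert hd2 using 1
    have hss : Real.sqrt (y + ε) * Real.sqrt (y + ε) = y + ε :=
      Real.mul_self_sqrt hye.le
    show (y + 2 * ε) / (2 * y ^ 2 * Real.sqrt (y + ε)) = _
    simp only [id_eq]
    field_simp
    linear_combination (-2) * Real.mul_self_sqrt hye.le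
    all_goals rfl
  have hgpos : ∀ y ∈ Ioi x, 0 ≤ g' y := by
    intro y hy
    have hy0 : (0:ℝ) < y := lt_trans hx0 hy
    have : 0 < Real.sqrt (y + ε) := Real.sqrt_pos.2 (by linarith)
    positivity
  have hgt : Tendsto g atTop (nhds 0) := by
    rw [show (0:ℝ) = -0 by ring]
    apply Tendsto.neg
    have hsq1 : ∀ᶠ y in atTop, 0 ≤ Real.sqrt (y + ε) / y :=
      Filter.eventually_atTop.2 ⟨ε, fun y hy =>
        div_nonneg (Real.sqrt_nonneg _) (by linarith)⟩
    have hsq2 : ∀ᶠ y in atTop, Real.sqrt (y + ε) / y ≤ Real.sqrt 2 / Real.sqrt y := by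
      refine Filter.eventually_atTop.2 ⟨ε, fun y hy => ?_⟩
      have hy0 : (0:ℝ) < y := lt_of_lt_of_le hε hy
      have h1 : Real.sqrt (y + ε) ≤ Real.sqrt (2 * y) := Real.sqrt_le_sqrt (by linarith)
      have h2 : Real.sqrt (2 * y) = Real.sqrt 2 * Real.sqrt y := Real.sqrt_mul (by norm_num) y
      have h3 : Real.sqrt y * Real.sqrt y = y := Real.mul_self_sqrt hy0.le
      have hsy : 0 < Real.sqrt y := Real.sqrt_pos.2 hy0
      have hle : Real.sqrt (y + ε) ≤ Real.sqrt 2 * Real.sqrt y := by rw [← h2]; exact h1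
      calc Real.sqrt (y + ε) / y ≤ Real.sqrt 2 * Real.sqrt y / y := by gcongr
        _ = Real.sqrt 2 / Real.sqrt y := by
              rw [div_eq_div_iff (ne_of_gt hy0) (ne_of_gt hsy), mul_assoc, h3]
    have hsq3 : Tendsto (fun y : ℝ => Real.sqrt 2 / Real.sqrt y) atTop (nhds 0) :=
      Tendsto.div_atTop tendsto_const_nhds sqrt_tendsto_atTop
    exact squeeze_zero' hsq1 hsq2 hsq3
  have hIg' : IntegrableOn g' (Ioi x) volume :=
    integrableOn_Ioi_deriv_of_nonneg hgc hgd hgpos hgt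
  have hvalg' : ∫ y in Ioi x, g' y = Real.sqrt (x + ε) / x := by
    rw [integral_Ioi_of_hasDerivAt_of_nonneg hgc hgd hgpos hgt]
    simp [hg]
  have hble : ∀ y ∈ Ioi x, h y ≤ g' y := by
    intro y hy
    have hyx : x < y := hy
    have hy0 : (0:ℝ) < y := lt_trans hx0 hyx
    have hye : (0:ℝ) < y + ε := by linarith
    have hs : 0 < Real.sqrt (y + ε) := Real.sqrt_pos.2 hye
    have habs : |y - x| = y - x := abs_of_nonneg (by linarith)
    simp only [hh, hg', habs]
    rw [show y + x + (y - x) = 2 * y by ring]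
    rw [div_le_div_iff₀ (by positivity) (by positivity)]
    nlinarith [mul_pos hy0 hs, mul_pos (mul_pos hy0 hy0) hs]
  have hbnn : ∀ y ∈ Ioi x, 0 ≤ h y := by
    intro y hy
    have hyx : x < y := hy
    have hy0 : (0:ℝ) < y := lt_trans hx0 hyx
    have : 0 ≤ Real.sqrt (y + ε) := Real.sqrt_nonneg _
    have h1 : (0:ℝ) ≤ y + x + |y - x| := by positivity
    exact div_nonneg zero_le_one (mul_nonneg h1 this)
  have hint2 : IntegrableOn h (Ioi x) volume := by
    apply Integrable.mono' hIg'
    · exact (kernel_cont ε x hε hx (fun y (hy : y ∈ Ioi x) => le_of_lt (lt_of_le_of_lt hx hy))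
        ).aestronglyMeasurable measurableSet_Ioi
    · refine (ae_restrict_iff' measurableSet_Ioi).2 (ae_of_all _ fun y hy => ?_)
      rw [Real.norm_eq_abs, abs_of_nonneg (hbnn y hy)]
      exact hble y hy
  have hval2 : ∫ y in Ioi x, h y ≤ Real.sqrt (x + ε) / x := by
    rw [← hvalg']
    exact setIntegral_mono_on hint2 hIg' measurableSet_Ioi hble
  -- combine
  have hint1' : IntegrableOn h (Ioc ε x) volume :=
    hint1.congr_fun (fun y hy => (heqon1 hy).symm) measurableSet_Ioc
  have hunion : Ioc ε x ∪ Ioi x = Ioi ε := Ioc_union_Ioi_eq_Ioi hx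
  have hintall : IntegrableOn h (Ioi ε) volume := by
    rw [← hunion]; exact hint1'.union hint2
  refine ⟨hintall, ?_⟩
  have hsplit : (∫ y in Ioi ε, h y) = (∫ y in Ioc ε x, h y) + ∫ y in Ioi x, h y := by
    rw [← hunion]
    exact setIntegral_union (Ioc_disjoint_Ioi le_rfl) measurableSet_Ioi hint1' hint2
  have hval1' : ∫ y in Ioc ε x, h y = (Real.sqrt (x + ε) - Real.sqrt (2 * ε)) / x := by
    rw [setIntegral_congr_fun measurableSet_Ioc heqon1]
    exact hval1
  -- final : (t - √(2ε))/x + t/x ≤ 2/t  where t = √(x+ε)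
  have ht0 : 0 < Real.sqrt (x + ε) := Real.sqrt_pos.2 (by linarith)
  have ht2 : Real.sqrt (x + ε) * Real.sqrt (x + ε) = x + ε := Real.mul_self_sqrt (by linarith)
  have hte : Real.sqrt (2 * ε) ≤ Real.sqrt (x + ε) := Real.sqrt_le_sqrt (by linarith)
  have hte2 : Real.sqrt (2 * ε) * Real.sqrt (2 * ε) = 2 * ε := Real.mul_self_sqrt (by linarith)
  have hte0 : 0 ≤ Real.sqrt (2 * ε) := Real.sqrt_nonneg _
  have hfin : (2 * Real.sqrt (x + ε) - Real.sqrt (2 * ε)) / x ≤ 2 / Real.sqrt (x + ε) := by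
    rw [div_le_div_iff₀ hx0 ht0]
    nlinarith [mul_le_mul_of_nonneg_left hte hte0]
  calc (∫ y in Ioi ε, h y) = (∫ y in Ioc ε x, h y) + ∫ y in Ioi x, h y := hsplit
    _ ≤ (Real.sqrt (x + ε) - Real.sqrt (2 * ε)) / x + Real.sqrt (x + ε) / x := by
        rw [hval1']; linarith [hval2]
    _ = (2 * Real.sqrt (x + ε) - Real.sqrt (2 * ε)) / x := by ring
    _ ≤ 2 / Real.sqrt (x + ε) := hfin

lemma f_contOn (ε x : ℝ) (hε : 0 < ε) (hx : ε ≤ x) (ψ : ℝ → ℝ)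
    (hc : ContinuousOn ψ (Ici ε)) :
    ContinuousOn (fun y => (1 / (y + x + |y - x|)) * (y / Real.sqrt (y + ε)) *
      (ψ y / (y + ψ y ^ 2 / (y + ε)))) (Ioi ε) := by
  have hsub : Ioi ε ⊆ Ici ε := Ioi_subset_Ici_self
  have hA : ContinuousOn (fun y : ℝ => 1 / (y + x + |y - x|)) (Ioi ε) := by
    apply ContinuousOn.div continuousOn_const
    · exact (((continuous_id.add continuous_const).add
        ((continuous_id.sub continuous_const).abs))).continuousOn
    · intro y hy
      have h1 : ε < y := hy
      have h2 := abs_nonneg (y - x)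
      intro h; linarith [h.symm.le]
  have hB : ContinuousOn (fun y : ℝ => y / Real.sqrt (y + ε)) (Ioi ε) := by
    apply ContinuousOn.div continuousOn_id
    · exact (Real.continuous_sqrt.comp (continuous_id.add continuous_const)).continuousOn
    · intro y hy
      have h1 : ε < y := hy
      exact ne_of_gt (Real.sqrt_pos.2 (by linarith))
  have hD : ContinuousOn (fun y : ℝ => y + ψ y ^ 2 / (y + ε)) (Ioi ε) := by
    apply continuousOn_id.add
    apply ContinuousOn.div ((hc.mono hsub).pow 2)
      ((continuous_id.add continuous_const).continuousOn)
    intro y hy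
    have h1 : ε < y := hy
    show y + ε ≠ 0
    exact ne_of_gt (by linarith)
  have hC : ContinuousOn (fun y : ℝ => ψ y / (y + ψ y ^ 2 / (y + ε))) (Ioi ε) := by
    apply ContinuousOn.div (hc.mono hsub) hD
    intro y hy
    have h1 : ε < y := hy
    have h2 : (0:ℝ) ≤ ψ y ^ 2 / (y + ε) := div_nonneg (sq_nonneg _) (by linarith)
    show y + ψ y ^ 2 / (y + ε) ≠ 0
    exact ne_of_gt (by linarith)
  exact (hA.mul hB).mul hC

lemma f_bound (ε x : ℝ) (hε : 0 < ε) (hx : ε ≤ x) (ψ : ℝ → ℝ) (M : ℝ)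
    (hM : ∀ y ∈ Ici ε, |ψ y| ≤ M) (h0 : ∀ y ∈ Ici ε, 0 ≤ ψ y)
    (y : ℝ) (hy : y ∈ Ioi ε) :
    |(1 / (y + x + |y - x|)) * (y / Real.sqrt (y + ε)) *
      (ψ y / (y + ψ y ^ 2 / (y + ε)))|
      ≤ M * (1 / ((y + x + |y - x|) * Real.sqrt (y + ε))) := by
  have hεy : ε < y := hy
  have hy0 : (0:ℝ) < y := lt_trans hε hεy
  have hyI : y ∈ Ici ε := le_of_lt hεy
  have habs := abs_nonneg (y - x)
  have hK : (0:ℝ) < y + x + |y - x| := by linarith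
  have hs : (0:ℝ) < Real.sqrt (y + ε) := Real.sqrt_pos.2 (by linarith)
  have hD : (0:ℝ) < y + ψ y ^ 2 / (y + ε) := by
    have : (0:ℝ) ≤ ψ y ^ 2 / (y + ε) := div_nonneg (sq_nonneg _) (by linarith)
    linarith
  have hψ0 := h0 y hyI
  have hψM : ψ y ≤ M := le_trans (le_abs_self _) (hM y hyI)
  have hCle : ψ y / (y + ψ y ^ 2 / (y + ε)) ≤ M / y := by
    have hd2 : (0:ℝ) ≤ ψ y ^ 2 / (y + ε) := div_nonneg (sq_nonneg _) (by linarith)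
    have h1 : ψ y / (y + ψ y ^ 2 / (y + ε)) ≤ ψ y / y := by
      gcongr
      linarith
    have h2 : ψ y / y ≤ M / y := by gcongr
    exact h1.trans h2
  have hC0 : 0 ≤ ψ y / (y + ψ y ^ 2 / (y + ε)) := div_nonneg hψ0 hD.le
  have habs' : |(1 / (y + x + |y - x|)) * (y / Real.sqrt (y + ε)) *
      (ψ y / (y + ψ y ^ 2 / (y + ε)))|
      = (1 / (y + x + |y - x|)) * (y / Real.sqrt (y + ε)) *
        (ψ y / (y + ψ y ^ 2 / (y + ε))) := by
    apply abs_of_nonneg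
    apply mul_nonneg (mul_nonneg _ _) hC0
    · positivity
    · positivity
  rw [habs']
  calc (1 / (y + x + |y - x|)) * (y / Real.sqrt (y + ε)) *
        (ψ y / (y + ψ y ^ 2 / (y + ε)))
      ≤ (1 / (y + x + |y - x|)) * (y / Real.sqrt (y + ε)) * (M / y) := by
        apply mul_le_mul_of_nonneg_left hCle
        positivity
    _ = M * (1 / ((y + x + |y - x|) * Real.sqrt (y + ε))) := by
        field_simp

lemma f_integrable (ε x : ℝ) (hε : 0 < ε) (hx : ε ≤ x) (ψ : ℝ → ℝ)
    (hc : ContinuousOn ψ (Ici ε)) (M : ℝ)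
    (hM : ∀ y ∈ Ici ε, |ψ y| ≤ M) (h0 : ∀ y ∈ Ici ε, 0 ≤ ψ y) :
    IntegrableOn (fun y => (1 / (y + x + |y - x|)) * (y / Real.sqrt (y + ε)) *
      (ψ y / (y + ψ y ^ 2 / (y + ε)))) (Ioi ε) volume := by
  have hker := (kernel_intgr ε x hε hx).1
  apply Integrable.mono' (hker.const_mul M)
  · exact (f_contOn ε x hε hx ψ hc).aestronglyMeasurable measurableSet_Ioi
  · refine (ae_restrict_iff' measurableSet_Ioi).2 (ae_of_all _ fun y hy => ?_)
    exact f_bound ε x hε hx ψ M hM h0 y hy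

theorem stmt_18 (ε lam : ℝ) (hε : 0 < ε) (hlam0 : 0 < lam) (hlam1 : lam < 1)
    (ψ φ : ℝ → ℝ) (hψ : memW ε ψ) (hφ : memW ε φ) :
    sSup ((fun x => |opB lam ε ψ x - opB lam ε φ x|) '' Set.Ici ε) ≤
      lam * sSup ((fun x => |ψ x - φ x|) '' Set.Ici ε) := by
  obtain ⟨hψc, ⟨Mψ, hMψ⟩, hψ0⟩ := hψ
  obtain ⟨hφc, ⟨Mφ, hMφ⟩, hφ0⟩ := hφ
  set S := sSup ((fun x => |ψ x - φ x|) '' Set.Ici ε) with hSdef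
  have hbddS : BddAbove ((fun x => |ψ x - φ x|) '' Set.Ici ε) := by
    refine ⟨Mψ + Mφ, ?_⟩
    rintro _ ⟨z, hz, rfl⟩
    calc |ψ z - φ z| ≤ |ψ z| + |φ z| := abs_sub _ _
      _ ≤ Mψ + Mφ := add_le_add (hMψ z hz) (hMφ z hz)
  have hbdd : ∀ y ∈ Ici ε, |ψ y - φ y| ≤ S := fun y hy =>
    le_csSup hbddS (mem_image_of_mem _ hy)
  have hS0 : 0 ≤ S := le_trans (abs_nonneg _) (hbdd ε self_mem_Ici)
  apply Real.sSup_le _ (mul_nonneg hlam0.le hS0)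
  rintro _ ⟨x, hx, rfl⟩
  have hx' : ε ≤ x := hx
  have hx0 : 0 < x := lt_of_lt_of_le hε hx'
  set t := Real.sqrt (x + ε) with htdef
  have ht0 : 0 < t := Real.sqrt_pos.2 (by linarith)
  set fψ : ℝ → ℝ := fun y => (1 / (y + x + |y - x|)) * (y / Real.sqrt (y + ε)) *
      (ψ y / (y + ψ y ^ 2 / (y + ε))) with hfψ
  set fφ : ℝ → ℝ := fun y => (1 / (y + x + |y - x|)) * (y / Real.sqrt (y + ε)) *
      (φ y / (y + φ y ^ 2 / (y + ε))) with hfφ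
  set h : ℝ → ℝ := fun y => 1 / ((y + x + |y - x|) * Real.sqrt (y + ε)) with hh
  have hIψ : IntegrableOn fψ (Ioi ε) volume :=
    f_integrable ε x hε hx' ψ hψc Mψ hMψ hψ0
  have hIφ : IntegrableOn fφ (Ioi ε) volume :=
    f_integrable ε x hε hx' φ hφc Mφ hMφ hφ0
  have hker := (kernel_intgr ε x hε hx').1
  have hkerval := (kernel_intgr ε x hε hx').2
  -- pointwise bound on the difference
  have hdiff : ∀ y ∈ Ioi ε, |fψ y - fφ y| ≤ S * h y := by
    intro y hy
    have hεy : ε < y := hy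
    have hy0 : (0:ℝ) < y := lt_trans hε hεy
    have hyI : y ∈ Ici ε := le_of_lt hεy
    have habs := abs_nonneg (y - x)
    have hK : (0:ℝ) < y + x + |y - x| := by linarith
    have hs : (0:ℝ) < Real.sqrt (y + ε) := Real.sqrt_pos.2 (by linarith)
    have hAB : (0:ℝ) ≤ (1 / (y + x + |y - x|)) * (y / Real.sqrt (y + ε)) := by positivity
    have heq : fψ y - fφ y = ((1 / (y + x + |y - x|)) * (y / Real.sqrt (y + ε))) *
        (ψ y / (y + ψ y ^ 2 / (y + ε)) - φ y / (y + φ y ^ 2 / (y + ε))) := by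
      simp only [hfψ, hfφ]; ring
    rw [heq, abs_mul, abs_of_nonneg hAB]
    have hlip := lip y (y + ε) (ψ y) (φ y) hy0 (by linarith) (hψ0 y hyI) (hφ0 y hyI)
    have hlip2 : |ψ y / (y + ψ y ^ 2 / (y + ε)) - φ y / (y + φ y ^ 2 / (y + ε))|
        ≤ S / y := hlip.trans (by gcongr; exact hbdd y hyI)
    calc (1 / (y + x + |y - x|)) * (y / Real.sqrt (y + ε)) *
          |ψ y / (y + ψ y ^ 2 / (y + ε)) - φ y / (y + φ y ^ 2 / (y + ε))|
        ≤ (1 / (y + x + |y - x|)) * (y / Real.sqrt (y + ε)) * (S / y) :=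
          mul_le_mul_of_nonneg_left hlip2 hAB
      _ = S * h y := by simp only [hh]; field_simp
  -- integral difference bound
  have hkey : |(∫ y in Ioi ε, fψ y) - ∫ y in Ioi ε, fφ y| ≤ S * (2 / t) := by
    rw [← integral_sub hIψ hIφ]
    calc |∫ y in Ioi ε, (fψ y - fφ y)| = ‖∫ y in Ioi ε, (fψ y - fφ y)‖ :=
          (Real.norm_eq_abs _).symm
      _ ≤ ∫ y in Ioi ε, ‖fψ y - fφ y‖ := norm_integral_le_integral_norm _
      _ = ∫ y in Ioi ε, |fψ y - fφ y| := by simp [Real.norm_eq_abs]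
      _ ≤ ∫ y in Ioi ε, S * h y := by
          apply setIntegral_mono_on ((hIψ.sub hIφ).abs) (hker.const_mul S)
            measurableSet_Ioi hdiff
      _ = S * ∫ y in Ioi ε, h y := by rw [integral_const_mul]
      _ ≤ S * (2 / t) := mul_le_mul_of_nonneg_left hkerval hS0
  -- conclude
  have hopB : opB lam ε ψ x - opB lam ε φ x
      = ((lam / 2) * t) * ((∫ y in Ioi ε, fψ y) - ∫ y in Ioi ε, fφ y) := by
    simp only [opB, hfψ, hfφ, htdef]
    ring
  show |opB lam ε ψ x - opB lam ε φ x| ≤ lam * S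
  rw [hopB, abs_mul, abs_of_nonneg (by positivity : (0:ℝ) ≤ (lam / 2) * t)]
  calc (lam / 2) * t * |(∫ y in Ioi ε, fψ y) - ∫ y in Ioi ε, fφ y|
      ≤ (lam / 2) * t * (S * (2 / t)) :=
        mul_le_mul_of_nonneg_left hkey (by positivity)
    _ = lam * S := by field_simp

end Aux
end

section
/- The zero function is the unique fixed point of B in W; that is, B(0) = 0 and every ψ ∈ W with Bψ = ψ satisfies ψ(x) = 0 for all x ∈ [ε,∞). -/
open Real Set MeasureTheory Filter

private lemma sqrt_add_tendsto (ε : ℝ) (hε : 0 ≤ ε) :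
    Tendsto (fun y : ℝ => Real.sqrt (y + ε)) atTop atTop := by
  rw [tendsto_atTop]
  intro b
  filter_upwards [eventually_ge_atTop (b ^ 2)] with y hy
  calc b ≤ |b| := le_abs_self b
    _ = Real.sqrt (b ^ 2) := (Real.sqrt_sq_eq_abs b).symm
    _ ≤ Real.sqrt (y + ε) := Real.sqrt_le_sqrt (by linarith)

private lemma int_pow32 (ε c a : ℝ) (hε : 0 < ε) (hc : 0 ≤ c) (ha : ε ≤ a) :
    IntegrableOn (fun y => c / ((y + ε) * Real.sqrt (y + ε))) (Set.Ioi a) volume ∧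
    ∫ y in Set.Ioi a, c / ((y + ε) * Real.sqrt (y + ε)) = 2 * c / Real.sqrt (a + ε) := by
  have hderiv : ∀ y ∈ Set.Ici a,
      HasDerivAt (fun z => -2 * c * (Real.sqrt (z + ε))⁻¹)
        (c / ((y + ε) * Real.sqrt (y + ε))) y := by
    intro y hy
    have hy0 : 0 < y + ε := by simp only [mem_Ici] at hy; linarith
    have hs : 0 < Real.sqrt (y + ε) := Real.sqrt_pos.mpr hy0
    have h1 : HasDerivAt (fun z : ℝ => z + ε) 1 y := (hasDerivAt_id y).add_const ε
    have h2 : HasDerivAt (fun z : ℝ => Real.sqrt (z + ε))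
        (1 / (2 * Real.sqrt (y + ε)) * 1) y :=
      (Real.hasDerivAt_sqrt hy0.ne').comp y h1
    have h3 := (h2.inv hs.ne').const_mul (-2 * c)
    refine h3.congr_deriv ?_
    rw [Real.sq_sqrt hy0.le]
    field_simp
  have hpos : ∀ y ∈ Set.Ioi a, 0 ≤ c / ((y + ε) * Real.sqrt (y + ε)) := by
    intro y hy
    have hy0 : 0 < y + ε := by simp only [mem_Ioi] at hy; linarith
    positivity
  have htend : Tendsto (fun z : ℝ => -2 * c * (Real.sqrt (z + ε))⁻¹) atTop (nhds 0) := by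
    have h := ((sqrt_add_tendsto ε hε.le).inv_tendsto_atTop).const_mul (-2 * c)
    simpa using h
  have ha0 : 0 < a + ε := by linarith
  have hsa : 0 < Real.sqrt (a + ε) := Real.sqrt_pos.mpr ha0
  constructor
  · exact integrableOn_Ioi_deriv_of_nonneg' hderiv hpos htend
  · rw [integral_Ioi_of_hasDerivAt_of_nonneg' hderiv hpos htend]
    rw [div_eq_mul_inv]
    ring

set_option maxHeartbeats 1000000 in
private lemma opB_le (ε lam x M : ℝ) (hε : 0 < ε) (hlam : 0 ≤ lam) (hx : ε ≤ x)
    (ψ : ℝ → ℝ) (hψ0 : ∀ y ∈ Set.Ici ε, 0 ≤ ψ y) (hψM : ∀ y ∈ Set.Ici ε, ψ y ≤ M) :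
    opB lam ε ψ x ≤ lam * M := by
  have hM0 : 0 ≤ M := le_trans (hψ0 ε self_mem_Ici) (hψM ε self_mem_Ici)
  have hx0 : 0 < x := lt_of_lt_of_le hε hx
  set a := Real.sqrt (x + ε) with ha_def
  set b := Real.sqrt (ε + ε) with hb_def
  have hxε : 0 < x + ε := by linarith
  have ha : 0 < a := Real.sqrt_pos.mpr hxε
  have hb : 0 < b := Real.sqrt_pos.mpr (by linarith)
  have hba : b ≤ a := Real.sqrt_le_sqrt (by linarith)
  have ha2 : a * a = x + ε := Real.mul_self_sqrt hxε.le
  have hb2 : b * b = ε + ε := Real.mul_self_sqrt (by linarith)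
  set f : ℝ → ℝ := fun y => (1 / (y + x + |y - x|)) * (y / Real.sqrt (y + ε)) *
      (ψ y / (y + (ψ y) ^ 2 / (y + ε))) with hf_def
  set G₁ : ℝ → ℝ := fun y => (M / (2 * x)) / Real.sqrt (y + ε) with hG1_def
  set G₂ : ℝ → ℝ := fun y => (M * (x + ε) / (2 * x)) / ((y + ε) * Real.sqrt (y + ε)) with hG2_def
  set G : ℝ → ℝ := fun y => min (G₁ y) (G₂ y) with hG_def
  -- pointwise facts
  have hf0 : ∀ y ∈ Set.Ioi ε, 0 ≤ f y := by
    intro y hy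
    simp only [mem_Ioi] at hy
    have hy0 : 0 < y := lt_trans hε hy
    have hyε : 0 < y + ε := by linarith
    have hden1 : 0 < y + x + |y - x| := by
      have := abs_nonneg (y - x); linarith
    have hden3 : 0 < y + ψ y ^ 2 / (y + ε) := by
      have := div_nonneg (sq_nonneg (ψ y)) hyε.le; linarith
    have hψy : 0 ≤ ψ y := hψ0 y hy.le
    have h1 : 0 ≤ 1 / (y + x + |y - x|) := by positivity
    have h2 : 0 ≤ y / Real.sqrt (y + ε) := by positivity
    exact mul_nonneg (mul_nonneg h1 h2) (div_nonneg hψy hden3.le)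
  have hfG : ∀ y ∈ Set.Ioi ε, f y ≤ G y := by
    intro y hy
    simp only [mem_Ioi] at hy
    have hy0 : 0 < y := lt_trans hε hy
    have hyε : 0 < y + ε := by linarith
    have hs : 0 < Real.sqrt (y + ε) := Real.sqrt_pos.mpr hyε
    have hden1 : 0 < y + x + |y - x| := by
      have := abs_nonneg (y - x); linarith
    have hden3 : 0 < y + ψ y ^ 2 / (y + ε) := by
      have := div_nonneg (sq_nonneg (ψ y)) hyε.le; linarith
    have hψy : 0 ≤ ψ y := hψ0 y hy.le
    have hC : ψ y / (y + ψ y ^ 2 / (y + ε)) ≤ M / y := by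
      apply div_le_div₀ hM0 (hψM y hy.le) hy0
      have := div_nonneg (sq_nonneg (ψ y)) hyε.le; linarith
    have hC0 : 0 ≤ ψ y / (y + ψ y ^ 2 / (y + ε)) := div_nonneg hψy hden3.le
    have hB : 0 ≤ y / Real.sqrt (y + ε) := by positivity
    rcases le_total y x with hyx | hyx
    · -- y ≤ x : f ≤ G₁ ≤ G₂
      have hA : 1 / (y + x + |y - x|) ≤ 1 / (2 * x) := by
        apply one_div_le_one_div_of_le (by positivity)
        have h := le_abs_self (x - y)
        rw [abs_sub_comm] at h
        linarith
      have hfG1 : f y ≤ G₁ y := by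
        have step : f y ≤ (1 / (2 * x)) * (y / Real.sqrt (y + ε)) * (M / y) :=
          mul_le_mul (mul_le_mul_of_nonneg_right hA hB) hC hC0 (by positivity)
        have heq : (1 / (2 * x)) * (y / Real.sqrt (y + ε)) * (M / y) = G₁ y := by
          simp only [hG1_def]
          field_simp
        linarith [step, heq.le]
      have h12 : G₁ y ≤ G₂ y := by
        have e1 : G₁ y = (M * (y + ε)) / (2 * x * ((y + ε) * Real.sqrt (y + ε))) := by
          simp only [hG1_def]; field_simp; try ring
        have e2 : G₂ y = (M * (x + ε)) / (2 * x * ((y + ε) * Real.sqrt (y + ε))) := by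
          simp only [hG2_def]; field_simp; try ring
        rw [e1, e2, div_le_div_iff_of_pos_right (by positivity)]
        nlinarith
      exact le_min hfG1 (hfG1.trans h12)
    · -- x ≤ y : f ≤ G₂ ≤ G₁
      have hA : 1 / (y + x + |y - x|) ≤ 1 / (2 * y) := by
        apply one_div_le_one_div_of_le (by positivity)
        have h := le_abs_self (y - x)
        linarith
      have hfG2 : f y ≤ G₂ y := by
        have step : f y ≤ (1 / (2 * y)) * (y / Real.sqrt (y + ε)) * (M / y) :=
          mul_le_mul (mul_le_mul_of_nonneg_right hA hB) hC hC0 (by positivity)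
        have e1 : (1 / (2 * y)) * (y / Real.sqrt (y + ε)) * (M / y)
            = (M * (x * (y + ε))) / (2 * x * y * ((y + ε) * Real.sqrt (y + ε))) := by
          field_simp
        have e2 : G₂ y = (M * ((x + ε) * y)) / (2 * x * y * ((y + ε) * Real.sqrt (y + ε))) := by
          simp only [hG2_def]; field_simp; try ring
        have e3 : (M * (x * (y + ε))) / (2 * x * y * ((y + ε) * Real.sqrt (y + ε)))
            ≤ (M * ((x + ε) * y)) / (2 * x * y * ((y + ε) * Real.sqrt (y + ε))) := by
          rw [div_le_div_iff_of_pos_right (by positivity)]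
          nlinarith [mul_nonneg (mul_nonneg hM0 hε.le) (sub_nonneg.mpr hyx)]
        rw [e2]
        calc f y ≤ (1 / (2 * y)) * (y / Real.sqrt (y + ε)) * (M / y) := step
          _ = _ := e1
          _ ≤ _ := e3
      have h21 : G₂ y ≤ G₁ y := by
        have e1 : G₁ y = (M * (y + ε)) / (2 * x * ((y + ε) * Real.sqrt (y + ε))) := by
          simp only [hG1_def]; field_simp; try ring
        have e2 : G₂ y = (M * (x + ε)) / (2 * x * ((y + ε) * Real.sqrt (y + ε))) := by
          simp only [hG2_def]; field_simp; try ring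
        rw [e2, e1, div_le_div_iff_of_pos_right (by positivity)]
        nlinarith
      exact le_min (hfG2.trans h21) hfG2
  -- continuity
  have hsqrt_cont : ContinuousOn (fun y : ℝ => Real.sqrt (y + ε)) (Set.Ici ε) :=
    (Real.continuous_sqrt.comp (continuous_id.add continuous_const)).continuousOn
  have hsne : ∀ y ∈ Set.Ici ε, Real.sqrt (y + ε) ≠ 0 := by
    intro y hy
    simp only [mem_Ici] at hy
    exact (Real.sqrt_pos.mpr (by linarith)).ne'
  have hG1cont : ContinuousOn G₁ (Set.Ici ε) :=
    continuousOn_const.div hsqrt_cont hsne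
  have hG2cont : ContinuousOn G₂ (Set.Ici ε) := by
    apply continuousOn_const.div
      (((continuous_id.add continuous_const).continuousOn).mul hsqrt_cont)
    intro y hy
    simp only [mem_Ici] at hy
    have : (0:ℝ) < y + ε := by linarith
    exact (mul_pos this (Real.sqrt_pos.mpr this)).ne'
  have hGcont : ContinuousOn G (Set.Ici ε) := fun y hy => (hG1cont y hy).min (hG2cont y hy)
  -- integrability
  have hIoc_sub : Set.Ioc ε x ⊆ Set.Ici ε := fun y hy => le_of_lt hy.1
  have hIoi_sub : Set.Ioi x ⊆ Set.Ici ε := fun y hy => le_trans hx (le_of_lt hy)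
  have hIoiε_sub : Set.Ioi ε ⊆ Set.Ici ε := fun y hy => mem_Ici.mpr (le_of_lt hy)
  have hG2int : IntegrableOn G₂ (Set.Ioi x) volume :=
    (int_pow32 ε (M * (x + ε) / (2 * x)) x hε (by positivity) hx).1
  have hG2val : ∫ y in Set.Ioi x, G₂ y = 2 * (M * (x + ε) / (2 * x)) / a :=
    (int_pow32 ε (M * (x + ε) / (2 * x)) x hε (by positivity) hx).2
  have hGIoc : IntegrableOn G (Set.Ioc ε x) volume :=
    ((hGcont.mono (Set.Icc_subset_Ici_self : Set.Icc ε x ⊆ Set.Ici ε)).integrableOn_Icc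
      (μ := volume)).mono_set Set.Ioc_subset_Icc_self
  have hG1Ioc : IntegrableOn G₁ (Set.Ioc ε x) volume :=
    ((hG1cont.mono (Set.Icc_subset_Ici_self : Set.Icc ε x ⊆ Set.Ici ε)).integrableOn_Icc
      (μ := volume)).mono_set Set.Ioc_subset_Icc_self
  have hGnonneg : ∀ y ∈ Set.Ici ε, 0 ≤ G y := by
    intro y hy
    simp only [mem_Ici] at hy
    have hyε : 0 < y + ε := by linarith
    have hs : 0 < Real.sqrt (y + ε) := Real.sqrt_pos.mpr hyε
    apply le_min
    · simp only [hG1_def]; positivity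
    · simp only [hG2_def]; positivity
  have hGIoi : IntegrableOn G (Set.Ioi x) volume := by
    apply MeasureTheory.Integrable.mono hG2int ((hGcont.mono hIoi_sub).aestronglyMeasurable measurableSet_Ioi)
    rw [ae_restrict_iff' measurableSet_Ioi]
    apply ae_of_all
    intro y hy
    rw [Real.norm_eq_abs, Real.norm_eq_abs, abs_of_nonneg (hGnonneg y (hIoi_sub hy))]
    have hyε : 0 < y + ε := by
      simp only [mem_Ioi] at hy; have := hIoi_sub hy; simp only [mem_Ici] at this; linarith
    have hs : 0 < Real.sqrt (y + ε) := Real.sqrt_pos.mpr hyε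
    have hG2y : 0 ≤ G₂ y := by simp only [hG2_def]; positivity
    rw [abs_of_nonneg hG2y]
    exact min_le_right _ _
  have hGIoiε : IntegrableOn G (Set.Ioi ε) volume := by
    rw [← Set.Ioc_union_Ioi_eq_Ioi hx]
    exact hGIoc.union hGIoi
  -- integral comparisons
  have hstep1 : (∫ y in Set.Ioi ε, f y) ≤ ∫ y in Set.Ioi ε, G y := by
    apply integral_mono_of_nonneg
    · exact (ae_restrict_iff' measurableSet_Ioi).mpr (ae_of_all _ hf0)
    · exact hGIoiε
    · exact (ae_restrict_iff' measurableSet_Ioi).mpr (ae_of_all _ hfG)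
  have hsplit : (∫ y in Set.Ioi ε, G y)
      = (∫ y in Set.Ioc ε x, G y) + ∫ y in Set.Ioi x, G y := by
    rw [← Set.Ioc_union_Ioi_eq_Ioi hx]
    exact setIntegral_union Set.Ioc_disjoint_Ioi_same measurableSet_Ioi hGIoc hGIoi
  have hstep2 : (∫ y in Set.Ioc ε x, G y) ≤ ∫ y in Set.Ioc ε x, G₁ y :=
    setIntegral_mono_on hGIoc hG1Ioc measurableSet_Ioc (fun y _ => min_le_left _ _)
  have hstep3 : (∫ y in Set.Ioi x, G y) ≤ ∫ y in Set.Ioi x, G₂ y :=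
    setIntegral_mono_on hGIoi hG2int measurableSet_Ioi (fun y _ => min_le_right _ _)
  have hG1val : (∫ y in Set.Ioc ε x, G₁ y) = M / x * (a - b) := by
    have hderiv : ∀ t ∈ Set.uIcc ε x, HasDerivAt (fun z => M / x * Real.sqrt (z + ε)) (G₁ t) t := by
      rw [Set.uIcc_of_le hx]
      intro t ht
      have ht0 : 0 < t + ε := by
        have := ht.1; linarith
      have h1 : HasDerivAt (fun z : ℝ => z + ε) 1 t := (hasDerivAt_id t).add_const ε
      have h2 : HasDerivAt (fun z : ℝ => Real.sqrt (z + ε))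
          (1 / (2 * Real.sqrt (t + ε)) * 1) t :=
        (Real.hasDerivAt_sqrt ht0.ne').comp t h1
      have h3 := h2.const_mul (M / x)
      refine h3.congr_deriv ?_
      have hs : 0 < Real.sqrt (t + ε) := Real.sqrt_pos.mpr ht0
      simp only [hG1_def]
      field_simp
      try ring
      try tauto
    have hint : IntervalIntegrable G₁ volume ε x := by
      apply ContinuousOn.intervalIntegrable
      apply hG1cont.mono
      rw [Set.uIcc_of_le hx]
      exact Set.Icc_subset_Ici_self
    rw [← intervalIntegral.integral_of_le hx,
      intervalIntegral.integral_eq_sub_of_hasDerivAt hderiv hint]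
    simp only [ha_def, hb_def]
    ring
  -- combine
  have hItot : (∫ y in Set.Ioi ε, f y) ≤ M / x * (a - b) + 2 * (M * (x + ε) / (2 * x)) / a := by
    calc (∫ y in Set.Ioi ε, f y) ≤ ∫ y in Set.Ioi ε, G y := hstep1
      _ = (∫ y in Set.Ioc ε x, G y) + ∫ y in Set.Ioi x, G y := hsplit
      _ ≤ (∫ y in Set.Ioc ε x, G₁ y) + ∫ y in Set.Ioi x, G₂ y := add_le_add hstep2 hstep3
      _ = M / x * (a - b) + 2 * (M * (x + ε) / (2 * x)) / a := by rw [hG1val, hG2val]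
  set T := M / x * (a - b) + 2 * (M * (x + ε) / (2 * x)) / a with hT_def
  have haT : a * T = M / x * (2 * (x + ε) - a * b) := by
    have h1 : a * T = M / x * (a * a - a * b) + M * (x + ε) / x := by
      simp only [hT_def]
      field_simp
    rw [h1, ha2]
    ring
  have hopB : opB lam ε ψ x = lam / 2 * a * ∫ y in Set.Ioi ε, f y := rfl
  have hfinal : lam / 2 * a * T ≤ lam * M := by
    have h2 : 2 * (x + ε) - a * b ≤ 2 * x := by nlinarith
    have h3 : M / x * (2 * (x + ε) - a * b) ≤ M / x * (2 * x) :=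
      mul_le_mul_of_nonneg_left h2 (by positivity)
    have h4 : M / x * (2 * x) = 2 * M := by field_simp; try ring
    calc lam / 2 * a * T = lam / 2 * (a * T) := by ring
      _ = lam / 2 * (M / x * (2 * (x + ε) - a * b)) := by rw [haT]
      _ ≤ lam / 2 * (2 * M) := by
          apply mul_le_mul_of_nonneg_left _ (by positivity)
          rw [← h4]; exact h3
      _ = lam * M := by ring
  calc opB lam ε ψ x = lam / 2 * a * ∫ y in Set.Ioi ε, f y := hopB
    _ ≤ lam / 2 * a * T := by
        apply mul_le_mul_of_nonneg_left hItot (by positivity)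
    _ ≤ lam * M := hfinal

theorem stmt_19 (ε lam : ℝ) (hε : 0 < ε) (hlam0 : 0 < lam) (hlam1 : lam < 1) :
    (∀ x ∈ Set.Ici ε, opB lam ε (fun _ => 0) x = 0) ∧
      ∀ ψ : ℝ → ℝ, memW ε ψ →
        (∀ x ∈ Set.Ici ε, opB lam ε ψ x = ψ x) →
        ∀ x ∈ Set.Ici ε, ψ x = 0 := by
  constructor
  · intro x hx
    simp [opB]
  · rintro ψ ⟨hcont, ⟨M₀, hM₀⟩, hpos⟩ hfix x hx
    set S := ψ '' Set.Ici ε with hS_def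
    have hne : S.Nonempty := ⟨ψ ε, ⟨ε, self_mem_Ici, rfl⟩⟩
    have hbdd : BddAbove S := by
      refine ⟨M₀, ?_⟩
      rintro v ⟨y, hy, rfl⟩
      exact le_trans (le_abs_self _) (hM₀ y hy)
    set M := sSup S with hM_def
    have hψM : ∀ y ∈ Set.Ici ε, ψ y ≤ M := fun y hy => le_csSup hbdd ⟨y, hy, rfl⟩
    have hkey : ∀ z ∈ Set.Ici ε, ψ z ≤ lam * M := by
      intro z hz
      rw [← hfix z hz]
      exact opB_le ε lam z M hε hlam0.le hz ψ hpos hψM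
    have hMlam : M ≤ lam * M := by
      apply csSup_le hne
      rintro v ⟨z, hz, rfl⟩
      exact hkey z hz
    have hM0 : 0 ≤ M := le_trans (hpos ε self_mem_Ici) (hψM ε self_mem_Ici)
    have hMle : M ≤ 0 := by nlinarith
    have h1 := hpos x hx
    have h2 := hψM x hx
    linarith
end
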